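/- arXiv:1810.10001 — 5 statements merged into one kernel-verified Lean document; each statement's English description precedes it below -/
import Mathlib

section
/- (Piola identity.) Let f : ℝ³ → ℝ³ be twice continuously differentiable. Then at every point, ∂₁(∂₂f ×₃ ∂₃f) + ∂₂(∂₃f ×₃ ∂₁f) + ∂₃(∂₁f ×₃ ∂₂f) = 0, where ∂ᵢ denotes the partial derivative in the i-th coordinate direction and ×₃ is the cross product on ℝ³. Equivalently, the divergence (taken row-wise in the curvilinear variables) of the cofactor matrix of the Jacobian of f vanishes: ∂_{ξᵢ}(J ∇ξᵢ) = 0. -/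
open Matrix

local notation:74 a:74 " ×₃ " b:75 => crossProduct a b

/-- The partial derivative of `g : ℝ³ → ℝ³` in the `i`-th coordinate direction. -/
noncomputable def pderiv3 (i : Fin 3) (g : (Fin 3 → ℝ) → (Fin 3 → ℝ))
    (x : Fin 3 → ℝ) : Fin 3 → ℝ :=
  fderiv ℝ g x (Pi.single i 1)

/-- The cross product on `ℝ³` as a continuous bilinear map. -/
noncomputable def crossCLM : (Fin 3 → ℝ) →L[ℝ] (Fin 3 → ℝ) →L[ℝ] (Fin 3 → ℝ) :=
  LinearMap.toContinuousLinearMap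
    { toFun := fun u => LinearMap.toContinuousLinearMap (crossProduct u)
      map_add' := by intros; ext; simp
      map_smul' := by intros; ext; simp }

@[simp] lemma crossCLM_apply (u v : Fin 3 → ℝ) : crossCLM u v = u ×₃ v := rfl

/-- Piola identity: for a `C²` map `f : ℝ³ → ℝ³`,
`∂₁(∂₂f ×₃ ∂₃f) + ∂₂(∂₃f ×₃ ∂₁f) + ∂₃(∂₁f ×₃ ∂₂f) = 0`, i.e. the divergence of the
cofactor matrix of the Jacobian of `f` vanishes. -/
theorem piola_identity (f : (Fin 3 → ℝ) → (Fin 3 → ℝ)) (hf : ContDiff ℝ 2 f)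
    (ξ : Fin 3 → ℝ) :
    pderiv3 0 (fun x => pderiv3 1 f x ×₃ pderiv3 2 f x) ξ
      + pderiv3 1 (fun x => pderiv3 2 f x ×₃ pderiv3 0 f x) ξ
      + pderiv3 2 (fun x => pderiv3 0 f x ×₃ pderiv3 1 f x) ξ = 0 := by
  have hf' : ContDiff ℝ 1 (fderiv ℝ f) := hf.fderiv_right (by norm_num)
  have hD : ∀ x, HasFDerivAt (fderiv ℝ f) (fderiv ℝ (fderiv ℝ f) x) x :=
    fun x => (hf'.differentiable one_ne_zero x).hasFDerivAt
  have hP : ∀ (i : Fin 3) (x : Fin 3 → ℝ), HasFDerivAt (pderiv3 i f)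
      ((fderiv ℝ (fderiv ℝ f) x).flip (Pi.single i 1)) x := by
    intro i x
    have h := (hD x).clm_apply (hasFDerivAt_const (Pi.single i 1) x)
    simpa [pderiv3] using h
  set A := fderiv ℝ (fderiv ℝ f) ξ with hA
  have hsymm : ∀ v w, A v w = A w v := hf.contDiffAt.isSymmSndFDerivAt (by simp)
  have key : ∀ i k j : Fin 3,
      pderiv3 j (fun x => pderiv3 i f x ×₃ pderiv3 k f x) ξ
        = fderiv ℝ f ξ (Pi.single i 1) ×₃ A (Pi.single j 1) (Pi.single k 1)
          + A (Pi.single j 1) (Pi.single i 1) ×₃ fderiv ℝ f ξ (Pi.single k 1) := by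
    intro i k j
    have hc : HasFDerivAt (fun x => crossCLM (pderiv3 i f x))
        (crossCLM.comp (A.flip (Pi.single i 1))) ξ :=
      crossCLM.hasFDerivAt.comp ξ (hP i ξ)
    have h := hc.clm_apply (hP k ξ)
    have h2 : HasFDerivAt (fun x => pderiv3 i f x ×₃ pderiv3 k f x)
        ((crossCLM (pderiv3 i f ξ)).comp (A.flip (Pi.single k 1))
          + (crossCLM.comp (A.flip (Pi.single i 1))).flip (pderiv3 k f ξ)) ξ := h
    rw [pderiv3, h2.fderiv]
    simp [pderiv3]
  rw [key 1 2 0, key 2 0 1, key 0 1 2,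
    hsymm (Pi.single 1 1) (Pi.single 0 1), hsymm (Pi.single 2 1) (Pi.single 0 1),
    hsymm (Pi.single 2 1) (Pi.single 1 1)]
  have reorder : ∀ a b c d e g : Fin 3 → ℝ,
      (a + b) + (c + d) + (e + g) = (a + g) + ((b + c) + (d + e)) := by
    intros; abel
  rw [reorder, cross_anticomm', cross_anticomm', cross_anticomm']
  simp
end

section
/- (Relation between the boundary exterior differential operator and the boundary nabla operator, eq. (6): D_S φ = ∇_S φ − n (∇_S · n) φ.) Let n : ℝ³ → ℝ³ and φ : ℝ³ → ℝ be differentiable at x ∈ ℝ³, and suppose ⟪n(x), n(x)⟫ = 1. Write P_{ik}(y) = δ_{ik} − nᵢ(y) nₖ(y) and let the tangential derivative of a function ψ be (∂_{S,i} ψ)(y) = Σₖ P_{ik}(y) (∂ₖ ψ)(y). Then for each j ∈ {1,2,3}: Σᵢ ∂_{S,i}(P_{ij} φ)(x) = (∂_{S,j} φ)(x) − nⱼ(x) (Σᵢ ∂_{S,i} nᵢ)(x) · φ(x). -/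
/-- The partial derivative of `ψ : ℝ³ → ℝ` in the `k`-th coordinate direction. -/
noncomputable def pd (k : Fin 3) (ψ : (Fin 3 → ℝ) → ℝ) (y : Fin 3 → ℝ) : ℝ :=
  fderiv ℝ ψ y (Pi.single k 1)

/-- The surface identity tensor `P = I − n nᵀ` associated with a unit normal field `n`. -/
def P (n : (Fin 3 → ℝ) → (Fin 3 → ℝ)) (i k : Fin 3) (y : Fin 3 → ℝ) : ℝ :=
  (if i = k then (1 : ℝ) else 0) - n y i * n y k

/-- The boundary (tangential) directional derivative `∂_{S,i} ψ = Σₖ P_{ik} ∂ₖ ψ`. -/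
noncomputable def pdS (n : (Fin 3 → ℝ) → (Fin 3 → ℝ)) (i : Fin 3)
    (ψ : (Fin 3 → ℝ) → ℝ) (y : Fin 3 → ℝ) : ℝ :=
  ∑ k, P n i k y * pd k ψ y

/-- Relation between the boundary exterior differential operator and the boundary nabla
operator: `D_S φ = ∇_S φ − n (∇_S · n) φ`, componentwise
`Σᵢ ∂_{S,i}(P_{ij} φ) = ∂_{S,j} φ − nⱼ (Σᵢ ∂_{S,i} nᵢ) φ`. -/
theorem exterior_diff_eq_nabla_sub_curvature
    (n : (Fin 3 → ℝ) → (Fin 3 → ℝ)) (φ : (Fin 3 → ℝ) → ℝ) (x : Fin 3 → ℝ)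
    (hn : DifferentiableAt ℝ n x) (hφ : DifferentiableAt ℝ φ x)
    (hunit : ∑ i, n x i * n x i = 1) (j : Fin 3) :
    ∑ i, pdS n i (fun y => P n i j y * φ y) x
      = pdS n j φ x - n x j * (∑ i, pdS n i (fun y => n y i) x) * φ x := by
  have hNi : ∀ i : Fin 3, HasFDerivAt (fun y => n y i) (fderiv ℝ (fun y => n y i) x) x :=
    fun i => (differentiableAt_pi.mp hn i).hasFDerivAt
  have key : ∀ j' i k : Fin 3, pd k (fun y => P n i j' y * φ y) x =
      P n i j' x * pd k φ x
        - (pd k (fun y => n y i) x * n x j' + n x i * pd k (fun y => n y j') x) * φ x := by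
    intro j' i k
    have h3 : HasFDerivAt (fun y => ((if i = j' then (1:ℝ) else 0) - n y i * n y j') * φ y) _ x := (((hasFDerivAt_const (if i = j' then (1:ℝ) else 0) x).sub
        ((hNi i).mul (hNi j'))).mul hφ.hasFDerivAt)
    simp only [pd, P]
    rw [h3.fderiv]
    simp [ContinuousLinearMap.add_apply, ContinuousLinearMap.smul_apply,
      ContinuousLinearMap.sub_apply, smul_eq_mul]
    ring
  have hu : n x 0 * n x 0 + n x 1 * n x 1 + n x 2 * n x 2 = 1 := by
    simpa [Fin.sum_univ_three] using hunit
  fin_cases j <;>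
    simp only [Fin.zero_eta, Fin.mk_one, Fin.reduceFinMk] <;>
    simp only [pdS, key, Fin.sum_univ_three] <;>
    simp only [P, Fin.isValue, Fin.reduceEq, reduceIte]
  · linear_combination (n x 0 * (n x 0 * pd 0 φ x + n x 1 * pd 1 φ x + n x 2 * pd 2 φ x)
      + φ x * (n x 0 * pd 0 (fun y => n y 0) x + n x 1 * pd 1 (fun y => n y 0) x
          + n x 2 * pd 2 (fun y => n y 0) x)) * hu
  · linear_combination (n x 1 * (n x 0 * pd 0 φ x + n x 1 * pd 1 φ x + n x 2 * pd 2 φ x)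
      + φ x * (n x 0 * pd 0 (fun y => n y 1) x + n x 1 * pd 1 (fun y => n y 1) x
          + n x 2 * pd 2 (fun y => n y 1) x)) * hu
  · linear_combination (n x 2 * (n x 0 * pd 0 φ x + n x 1 * pd 1 φ x + n x 2 * pd 2 φ x)
      + φ x * (n x 0 * pd 0 (fun y => n y 2) x + n x 1 * pd 1 (fun y => n y 2) x
          + n x 2 * pd 2 (fun y => n y 2) x)) * hu
end

section
/- (Mean curvature vector identity: ∇_S · I_S = −n (∇_S · n).) Let n : ℝ³ → ℝ³ be differentiable at x ∈ ℝ³ with ⟪n(x), n(x)⟫ = 1, write P_{ik}(y) = δ_{ik} − nᵢ(y) nₖ(y), and let (∂_{S,i} ψ)(y) = Σₖ P_{ik}(y) (∂ₖ ψ)(y). Then for each j ∈ {1,2,3}: Σᵢ ∂_{S,i}(P_{ij})(x) = − nⱼ(x) (Σᵢ ∂_{S,i} nᵢ)(x). -/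
/-- Mean curvature vector identity: `∇_S · I_S = −n (∇_S · n)`, componentwise
`Σᵢ ∂_{S,i} P_{ij} = − nⱼ (Σᵢ ∂_{S,i} nᵢ)`. -/
theorem surface_div_surface_identity_tensor
    (n : (Fin 3 → ℝ) → (Fin 3 → ℝ)) (x : Fin 3 → ℝ)
    (hn : DifferentiableAt ℝ n x)
    (hunit : ∑ i, n x i * n x i = 1) (j : Fin 3) :
    ∑ i, pdS n i (fun y => P n i j y) x
      = - (n x j * (∑ i, pdS n i (fun y => n y i) x)) := by
  have hni : ∀ i : Fin 3, DifferentiableAt ℝ (fun y => n y i) x := fun i =>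
    differentiableAt_pi.mp hn i
  have hpd : ∀ i k : Fin 3, pd k (fun y => P n i j y) x
      = -(pd k (fun y => n y i) x * n x j + n x i * pd k (fun y => n y j) x) := by
    intro i k
    unfold pd P
    rw [fderiv_fun_sub (differentiableAt_const _) ((hni i).fun_mul (hni j)),
        fderiv_fun_const, fderiv_fun_mul (hni i) (hni j)]
    simp
    ring
  unfold pdS
  simp only [hpd]
  simp only [P]
  simp only [Fin.sum_univ_three] at hunit ⊢
  norm_num [Fin.ext_iff]
  linear_combination (n x 0 * pd 0 (fun y => n y j) x + n x 1 * pd 1 (fun y => n y j) x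
    + n x 2 * pd 2 (fun y => n y j) x) * hunit
end

section
/- (Variation of the unit normal, eq. (37): δn = −(∇_S ρ) · n.) Let a, b ∈ ℝ³ with a ×₃ b ≠ 0, let n = (a ×₃ b)/‖a ×₃ b‖, and let G be a real 3×3 matrix. Then the function ε ↦ ((a + ε G a) ×₃ (b + ε G b)) / ‖(a + ε G a) ×₃ (b + ε G b)‖ is differentiable at ε = 0 with derivative −(I − n nᵀ)(Gᵀ n), i.e. −(Gᵀ n − ⟪n, Gᵀ n⟫ n). -/
open scoped RealInnerProductSpace

/-- The cross product on `ℝ³` endowed with the Euclidean norm. -/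
noncomputable def cross3 (u v : EuclideanSpace ℝ (Fin 3)) : EuclideanSpace ℝ (Fin 3) :=
  WithLp.toLp 2 ![u 1 * v 2 - u 2 * v 1, u 2 * v 0 - u 0 * v 2, u 0 * v 1 - u 1 * v 0]

/-- Matrix–vector multiplication on Euclidean `ℝ³`. -/
noncomputable def mulv (G : Matrix (Fin 3) (Fin 3) ℝ) (v : EuclideanSpace ℝ (Fin 3)) :
    EuclideanSpace ℝ (Fin 3) :=
  WithLp.toLp 2 (G.mulVec v)

/-- Variation of the unit normal `δn = −(∇_S ρ)·n`: with `n = (a ×₃ b)/‖a ×₃ b‖`, the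
function `ε ↦ ((a + ε G a) ×₃ (b + ε G b)) / ‖(a + ε G a) ×₃ (b + ε G b)‖` is
differentiable at `ε = 0` with derivative `−(I − n nᵀ)(Gᵀ n) = −(Gᵀ n − ⟪n, Gᵀ n⟫ n)`. -/
theorem hasDerivAt_unit_normal (a b : EuclideanSpace ℝ (Fin 3))
    (h : cross3 a b ≠ 0) (G : Matrix (Fin 3) (Fin 3) ℝ) :
    let n := ‖cross3 a b‖⁻¹ • cross3 a b
    HasDerivAt
      (fun ε : ℝ => ‖cross3 (a + ε • mulv G a) (b + ε • mulv G b)‖⁻¹ •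
        cross3 (a + ε • mulv G a) (b + ε • mulv G b))
      (-(mulv G.transpose n - ⟪n, mulv G.transpose n⟫ • n)) 0 := by
  intro n
  set c0 := cross3 a b with hc0
  set m := mulv G.transpose c0 with hm
  set w := cross3 (mulv G a) b + cross3 a (mulv G b) with hw
  set u := cross3 (mulv G a) (mulv G b) with hu
  set r := ‖c0‖ with hrdef
  have hr : r ≠ 0 := norm_ne_zero_iff.mpr h
  -- polynomial expansion of the curve
  have key : ∀ ε : ℝ, cross3 (a + ε • mulv G a) (b + ε • mulv G b)
      = c0 + ε • w + (ε*ε) • u := by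
    intro ε
    ext i
    fin_cases i <;>
    · simp [hc0, hw, hu, cross3, mulv, Matrix.mulVec, dotProduct, Fin.sum_univ_three,
        PiLp.add_apply, PiLp.smul_apply, smul_eq_mul]
      ring
  -- cross-product identity
  have wid : w = G.trace • c0 - m := by
    rw [hw, hm, hc0]
    ext i
    fin_cases i <;>
    · simp [cross3, mulv, Matrix.mulVec, dotProduct, Fin.sum_univ_three, PiLp.add_apply,
        PiLp.smul_apply, PiLp.sub_apply, smul_eq_mul, Matrix.trace, Matrix.diag,
        Matrix.transpose_apply]
      ring
  set c : ℝ → EuclideanSpace ℝ (Fin 3) :=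
    fun ε => cross3 (a + ε • mulv G a) (b + ε • mulv G b) with hcdef
  have hc : HasDerivAt c w 0 := by
    have h1 : HasDerivAt (fun ε : ℝ => c0 + ε • w + (ε*ε) • u) w 0 := by
      have ha : HasDerivAt (fun ε : ℝ => ε • w) w 0 := by
        simpa using (hasDerivAt_id (0:ℝ)).smul_const w
      have hb : HasDerivAt (fun ε : ℝ => (ε*ε) • u) (0:EuclideanSpace ℝ (Fin 3)) 0 := by
        simpa using (((hasDerivAt_id (0:ℝ)).mul (hasDerivAt_id (0:ℝ)))).smul_const u
      exact (((hasDerivAt_const (0:ℝ) c0).add ha).add hb).congr_deriv (by simp)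
    have hfun : c = fun ε : ℝ => c0 + ε • w + (ε*ε) • u := funext key
    rw [hfun]; exact h1
  have hg : HasDerivAt (fun ε => ⟪c ε, c ε⟫) (⟪c 0, w⟫ + ⟪w, c 0⟫) 0 := hc.inner ℝ hc
  have hc00 : c 0 = c0 := by simp [hcdef, key 0]
  have hgg : HasDerivAt (fun ε => ⟪c ε, c ε⟫) (2 * ⟪c0, w⟫) 0 := by
    convert hg using 1
    rw [hc00, real_inner_comm c0 w]; ring
  have hg0 : ⟪c 0, c 0⟫ = r * r := by
    rw [hc00, real_inner_self_eq_norm_mul_norm]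
  have hg0ne : ⟪c 0, c 0⟫ ≠ 0 := by rw [hg0]; exact mul_ne_zero hr hr
  have hsqrt : HasDerivAt (fun ε => Real.sqrt ⟪c ε, c ε⟫)
      (1 / (2 * Real.sqrt ⟪c 0, c 0⟫) * (2 * ⟪c0, w⟫)) 0 :=
    (Real.hasDerivAt_sqrt hg0ne).comp 0 hgg
  have hsq : Real.sqrt ⟪c 0, c 0⟫ = r := by
    rw [hg0]; exact Real.sqrt_mul_self (norm_nonneg _)
  have hnorm : HasDerivAt (fun ε => ‖c ε‖) (⟪c0, w⟫ / r) 0 := by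
    have : (fun ε => Real.sqrt ⟪c ε, c ε⟫) = fun ε => ‖c ε‖ := by
      funext ε
      rw [real_inner_self_eq_norm_mul_norm, Real.sqrt_mul_self (norm_nonneg _)]
    rw [← this]
    convert hsqrt using 1
    rw [hsq]; field_simp
  have hinv : HasDerivAt (fun ε => ‖c ε‖⁻¹) (-(⟪c0, w⟫ / r) / r ^ 2) 0 := by
    have := hnorm.inv (by rw [hc00]; exact hr)
    exact this.congr_deriv (by rw [hc00])
  have hf : HasDerivAt (fun ε => ‖c ε‖⁻¹ • c ε)
      (r⁻¹ • w + (-(⟪c0, w⟫ / r) / r ^ 2) • c0) 0 := by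
    have := hinv.smul hc
    exact this.congr_deriv (by rw [hc00])
  have : HasDerivAt
      (fun ε : ℝ => ‖cross3 (a + ε • mulv G a) (b + ε • mulv G b)‖⁻¹ •
        cross3 (a + ε • mulv G a) (b + ε • mulv G b))
      (r⁻¹ • w + (-(⟪c0, w⟫ / r) / r ^ 2) • c0) 0 := hf
  convert this using 1
  -- algebraic identification of the derivative value
  have hn : n = r⁻¹ • c0 := rfl
  have hGn : mulv G.transpose n = r⁻¹ • m := by
    rw [hn, hm, mulv]
    ext i
    simp [mulv, Matrix.mulVec, dotProduct, Fin.sum_univ_three, PiLp.smul_apply, smul_eq_mul]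
    ring
  rw [hn, hGn, wid]
  have hip : ⟪c0, G.trace • c0 - m⟫ = G.trace * (r*r) - ⟪c0, m⟫ := by
    rw [inner_sub_right, real_inner_smul_right, real_inner_self_eq_norm_mul_norm]
  rw [hip]
  simp only [real_inner_smul_left, real_inner_smul_right]
  match_scalars <;> field_simp <;> try ring
end

section
/- (Reynolds transport theorem in derivative form, eq. (40): d/dε ∫_{V_ε} φ dV |_{ε=0} = ∫_{V₀} ∇·(ρ φ) dV.) Let φ : ℝ³ → ℝ and ρ : ℝ³ → ℝ³ be continuously differentiable, and let K ⊂ ℝ³ be a compact measurable set. Then the function F(ε) = ∫_K φ(x + ε ρ(x)) · det(I + ε Dρ(x)) dx is differentiable at ε = 0 with derivative F'(0) = ∫_K div(φ ρ)(x) dx = ∫_K ( ρ(x)·∇φ(x) + φ(x) div ρ(x) ) dx. -/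
open MeasureTheory

noncomputable def jacMat (ρ : (Fin 3 → ℝ) → (Fin 3 → ℝ)) (x : Fin 3 → ℝ) :
    Matrix (Fin 3) (Fin 3) ℝ :=
  Matrix.of fun i j => fderiv ℝ ρ x (Pi.single j 1) i

noncomputable def c2 (J : Matrix (Fin 3) (Fin 3) ℝ) : ℝ := (J.trace ^ 2 - (J * J).trace) / 2

lemma det_one_add_smul3 (J : Matrix (Fin 3) (Fin 3) ℝ) (t : ℝ) :
    (1 + t • J).det = 1 + t * J.trace + t ^ 2 * c2 J + t ^ 3 * J.det := by
  simp [Matrix.det_fin_three, c2, Matrix.trace_fin_three, Matrix.mul_apply, Fin.sum_univ_three,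
    Matrix.one_apply, Matrix.add_apply, Matrix.smul_apply, smul_eq_mul]
  ring

lemma hasDerivAt_det_one_add_smul (J : Matrix (Fin 3) (Fin 3) ℝ) (t : ℝ) :
    HasDerivAt (fun s : ℝ => (1 + s • J).det)
      (J.trace + 2 * t * c2 J + 3 * t ^ 2 * J.det) t := by
  have h : (fun s : ℝ => (1 + s • J).det)
      = fun s : ℝ => 1 + s * J.trace + s ^ 2 * c2 J + s ^ 3 * J.det :=
    funext fun s => det_one_add_smul3 J s
  rw [h]
  have h1 : HasDerivAt (fun s : ℝ => s * J.trace) J.trace t := by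
    simpa using (hasDerivAt_id t).mul_const J.trace
  have h2 : HasDerivAt (fun s : ℝ => s ^ 2 * c2 J) (2 * t * c2 J) t := by
    simpa [mul_comm, mul_assoc] using (hasDerivAt_pow 2 t).mul_const (c2 J)
  have h3 : HasDerivAt (fun s : ℝ => s ^ 3 * J.det) (3 * t ^ 2 * J.det) t := by
    simpa using (hasDerivAt_pow 3 t).mul_const J.det
  have := (((hasDerivAt_const t (1:ℝ)).add h1).add h2).add h3
  simp only [zero_add] at this
  exact this

/-- Reynolds transport theorem in derivative form: for `C¹` functions `φ : ℝ³ → ℝ` and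
`ρ : ℝ³ → ℝ³` and a compact measurable set `K`, the function
`F(ε) = ∫_K φ(x + ε ρ(x)) det(I + ε Dρ(x)) dx` is differentiable at `ε = 0` with
derivative `∫_K div(φ ρ) = ∫_K (ρ·∇φ + φ div ρ)`. -/
theorem reynolds_transport (φ : (Fin 3 → ℝ) → ℝ) (ρ : (Fin 3 → ℝ) → (Fin 3 → ℝ))
    (hφ : ContDiff ℝ 1 φ) (hρ : ContDiff ℝ 1 ρ)
    (K : Set (Fin 3 → ℝ)) (hK : IsCompact K) (hKm : MeasurableSet K) :
    HasDerivAt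
      (fun ε : ℝ => ∫ x in K, φ (x + ε • ρ x) * (1 + ε • jacMat ρ x).det)
      (∫ x in K, (fderiv ℝ φ x (ρ x) + φ x * (jacMat ρ x).trace)) 0 := by
  have hρc : Continuous ρ := hρ.continuous
  have hφc : Continuous φ := hφ.continuous
  have hφ' : Continuous (fderiv ℝ φ) := hφ.continuous_fderiv one_ne_zero
  have hρ' : Continuous (fderiv ℝ ρ) := hρ.continuous_fderiv one_ne_zero
  have hJc : Continuous (jacMat ρ) := by
    apply continuous_matrix
    intro i j
    exact (continuous_apply i).comp (hρ'.clm_apply continuous_const)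
  have htr : Continuous fun x => (jacMat ρ x).trace := hJc.matrix_trace
  have hdet : Continuous fun x => (jacMat ρ x).det := hJc.matrix_det
  have hc2 : Continuous fun x => c2 (jacMat ρ x) := by
    unfold c2
    exact ((htr.pow 2).sub (hJc.matrix_mul hJc).matrix_trace).div_const 2
  -- the compact set of all deformed points
  set g : ℝ × (Fin 3 → ℝ) → (Fin 3 → ℝ) := fun p => p.2 + p.1 • ρ p.2 with hgdef
  have hgc : Continuous g := continuous_snd.add (continuous_fst.smul (hρc.comp continuous_snd))
  set S : Set (Fin 3 → ℝ) := g '' (Set.Icc (-1 : ℝ) 1 ×ˢ K) with hSdef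
  have hS : IsCompact S := ((isCompact_Icc).prod hK).image hgc
  -- bounds
  obtain ⟨C0, hC0⟩ := hS.exists_bound_of_continuousOn hφc.continuousOn
  obtain ⟨C1, hC1⟩ := hS.exists_bound_of_continuousOn hφ'.continuousOn
  obtain ⟨C2, hC2⟩ := hK.exists_bound_of_continuousOn hρc.continuousOn
  obtain ⟨C3, hC3⟩ := hK.exists_bound_of_continuousOn htr.continuousOn
  obtain ⟨C4, hC4⟩ := hK.exists_bound_of_continuousOn hc2.continuousOn
  obtain ⟨C5, hC5⟩ := hK.exists_bound_of_continuousOn hdet.continuousOn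
  set M0 := max C0 0 with hM0def
  set M1 := max C1 0 with hM1def
  set M2 := max C2 0 with hM2def
  set M3 := max C3 0 with hM3def
  set M4 := max C4 0 with hM4def
  set M5 := max C5 0 with hM5def
  have hM0 : ∀ y ∈ S, |φ y| ≤ M0 := fun y hy =>
    (Real.norm_eq_abs (φ y) ▸ hC0 y hy).trans (le_max_left _ _)
  have hM1 : ∀ y ∈ S, ‖fderiv ℝ φ y‖ ≤ M1 := fun y hy => (hC1 y hy).trans (le_max_left _ _)
  have hM2 : ∀ x ∈ K, ‖ρ x‖ ≤ M2 := fun x hx => (hC2 x hx).trans (le_max_left _ _)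
  have hM3 : ∀ x ∈ K, |(jacMat ρ x).trace| ≤ M3 := fun x hx =>
    (Real.norm_eq_abs _ ▸ hC3 x hx).trans (le_max_left _ _)
  have hM4 : ∀ x ∈ K, |c2 (jacMat ρ x)| ≤ M4 := fun x hx =>
    (Real.norm_eq_abs _ ▸ hC4 x hx).trans (le_max_left _ _)
  have hM5 : ∀ x ∈ K, |(jacMat ρ x).det| ≤ M5 := fun x hx =>
    (Real.norm_eq_abs _ ▸ hC5 x hx).trans (le_max_left _ _)
  have hM0n : (0:ℝ) ≤ M0 := le_max_right _ _
  have hM1n : (0:ℝ) ≤ M1 := le_max_right _ _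
  have hM2n : (0:ℝ) ≤ M2 := le_max_right _ _
  have hM3n : (0:ℝ) ≤ M3 := le_max_right _ _
  have hM4n : (0:ℝ) ≤ M4 := le_max_right _ _
  have hM5n : (0:ℝ) ≤ M5 := le_max_right _ _
  -- the derivative family
  set F' : ℝ → (Fin 3 → ℝ) → ℝ := fun ε x =>
    fderiv ℝ φ (x + ε • ρ x) (ρ x) * (1 + ε • jacMat ρ x).det +
      φ (x + ε • ρ x) * ((jacMat ρ x).trace + 2 * ε * c2 (jacMat ρ x) +
        3 * ε ^ 2 * (jacMat ρ x).det) with hF'def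
  set B : ℝ := M1 * M2 * (1 + M3 + M4 + M5) + M0 * (M3 + 2 * M4 + 3 * M5) with hBdef
  have hF_meas : ∀ᶠ ε in nhds (0:ℝ), AEStronglyMeasurable
      (fun x => φ (x + ε • ρ x) * (1 + ε • jacMat ρ x).det) (volume.restrict K) := by
    refine Filter.Eventually.of_forall fun ε => ?_
    exact ((hφc.comp (continuous_id.add (hρc.const_smul ε))).mul
      ((continuous_const.add (hJc.const_smul ε)).matrix_det)).aestronglyMeasurable
  have hF_int : Integrable (fun x => φ (x + (0:ℝ) • ρ x) * (1 + (0:ℝ) • jacMat ρ x).det)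
      (volume.restrict K) :=
    ((hφc.comp (continuous_id.add (hρc.const_smul (0:ℝ)))).mul
      ((continuous_const.add (hJc.const_smul (0:ℝ))).matrix_det)).continuousOn.integrableOn_compact hK
  have hF'_meas : AEStronglyMeasurable (F' 0) (volume.restrict K) := by
    apply Continuous.aestronglyMeasurable
    apply Continuous.add
    · exact ((hφ'.comp (continuous_id.add (hρc.const_smul (0:ℝ)))).clm_apply hρc).mul
        ((continuous_const.add (hJc.const_smul (0:ℝ))).matrix_det)
    · exact (hφc.comp (continuous_id.add (hρc.const_smul (0:ℝ)))).mul
        ((htr.add ((continuous_const.mul continuous_const).mul hc2)).add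
          ((continuous_const.mul continuous_const).mul hdet))
  have h_bound : ∀ᵐ x ∂(volume.restrict K), ∀ ε ∈ Metric.ball (0:ℝ) 1, ‖F' ε x‖ ≤ B := by
    refine ae_restrict_of_forall_mem hKm fun x hx => ?_
    intro ε hε
    have hεle : |ε| ≤ 1 := by
      have := Metric.mem_ball.1 hε
      rw [Real.dist_eq, sub_zero] at this
      exact this.le
    have hy : x + ε • ρ x ∈ S := ⟨(ε, x), ⟨Set.mem_Icc.2 (abs_le.1 hεle), hx⟩, rfl⟩
    have hA : |fderiv ℝ φ (x + ε • ρ x) (ρ x)| ≤ M1 * M2 := by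
      calc |fderiv ℝ φ (x + ε • ρ x) (ρ x)| = ‖fderiv ℝ φ (x + ε • ρ x) (ρ x)‖ :=
            (Real.norm_eq_abs _).symm
        _ ≤ ‖fderiv ℝ φ (x + ε • ρ x)‖ * ‖ρ x‖ := ContinuousLinearMap.le_opNorm _ _
        _ ≤ M1 * M2 := mul_le_mul (hM1 _ hy) (hM2 _ hx) (norm_nonneg _) hM1n
    have e1 : |ε * (jacMat ρ x).trace| ≤ M3 := by
      rw [abs_mul]
      calc |ε| * |(jacMat ρ x).trace| ≤ 1 * M3 :=
            mul_le_mul hεle (hM3 _ hx) (abs_nonneg _) zero_le_one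
        _ = M3 := one_mul _
    have e2 : |ε ^ 2 * c2 (jacMat ρ x)| ≤ M4 := by
      rw [abs_mul, abs_pow]
      calc |ε| ^ 2 * |c2 (jacMat ρ x)| ≤ 1 * M4 :=
            mul_le_mul (pow_le_one₀ (abs_nonneg _) hεle) (hM4 _ hx) (abs_nonneg _) zero_le_one
        _ = M4 := one_mul _
    have e3 : |ε ^ 3 * (jacMat ρ x).det| ≤ M5 := by
      rw [abs_mul, abs_pow]
      calc |ε| ^ 3 * |(jacMat ρ x).det| ≤ 1 * M5 :=
            mul_le_mul (pow_le_one₀ (abs_nonneg _) hεle) (hM5 _ hx) (abs_nonneg _) zero_le_one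
        _ = M5 := one_mul _
    have hD : |(1 + ε • jacMat ρ x).det| ≤ 1 + M3 + M4 + M5 := by
      rw [det_one_add_smul3]
      have t1 := abs_add_le (1 + ε * (jacMat ρ x).trace + ε ^ 2 * c2 (jacMat ρ x))
        (ε ^ 3 * (jacMat ρ x).det)
      have t2 := abs_add_le (1 + ε * (jacMat ρ x).trace) (ε ^ 2 * c2 (jacMat ρ x))
      have t3 := abs_add_le (1:ℝ) (ε * (jacMat ρ x).trace)
      simp only [abs_one] at t3
      linarith
    have e2' : |2 * ε * c2 (jacMat ρ x)| ≤ 2 * M4 := by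
      rw [abs_mul, abs_mul]
      calc |2| * |ε| * |c2 (jacMat ρ x)| ≤ 2 * 1 * M4 := by
            apply mul_le_mul _ (hM4 _ hx) (abs_nonneg _) (by norm_num)
            rw [abs_two]
            nlinarith [abs_nonneg ε]
        _ = 2 * M4 := by ring
    have e3' : |3 * ε ^ 2 * (jacMat ρ x).det| ≤ 3 * M5 := by
      rw [abs_mul, abs_mul, abs_pow]
      have h2 : |ε| ^ 2 ≤ 1 := pow_le_one₀ (abs_nonneg _) hεle
      calc |(3:ℝ)| * |ε| ^ 2 * |(jacMat ρ x).det| ≤ 3 * 1 * M5 := by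
            apply mul_le_mul _ (hM5 _ hx) (abs_nonneg _) (by norm_num)
            rw [show |(3:ℝ)| = 3 by norm_num]
            nlinarith
        _ = 3 * M5 := by ring
    have hD' : |(jacMat ρ x).trace + 2 * ε * c2 (jacMat ρ x) + 3 * ε ^ 2 * (jacMat ρ x).det|
        ≤ M3 + 2 * M4 + 3 * M5 := by
      have t1 := abs_add_le ((jacMat ρ x).trace + 2 * ε * c2 (jacMat ρ x))
        (3 * ε ^ 2 * (jacMat ρ x).det)
      have t2 := abs_add_le ((jacMat ρ x).trace) (2 * ε * c2 (jacMat ρ x))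
      linarith [hM3 _ hx]
    have hP : |φ (x + ε • ρ x)| ≤ M0 := hM0 _ hy
    rw [Real.norm_eq_abs, hF'def]
    calc |fderiv ℝ φ (x + ε • ρ x) (ρ x) * (1 + ε • jacMat ρ x).det +
          φ (x + ε • ρ x) * ((jacMat ρ x).trace + 2 * ε * c2 (jacMat ρ x) +
            3 * ε ^ 2 * (jacMat ρ x).det)|
        ≤ |fderiv ℝ φ (x + ε • ρ x) (ρ x)| * |(1 + ε • jacMat ρ x).det| +
          |φ (x + ε • ρ x)| * |(jacMat ρ x).trace + 2 * ε * c2 (jacMat ρ x) +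
            3 * ε ^ 2 * (jacMat ρ x).det| := by
          refine (abs_add_le _ _).trans ?_
          rw [abs_mul, abs_mul]
      _ ≤ M1 * M2 * (1 + M3 + M4 + M5) + M0 * (M3 + 2 * M4 + 3 * M5) := by
          apply add_le_add
          · exact mul_le_mul hA hD (abs_nonneg _) (by positivity)
          · exact mul_le_mul hP hD' (abs_nonneg _) hM0n
  have bound_int : Integrable (fun _ : (Fin 3 → ℝ) => B) (volume.restrict K) :=
    integrableOn_const hK.measure_lt_top.ne
  have h_diff : ∀ᵐ x ∂(volume.restrict K), ∀ ε ∈ Metric.ball (0:ℝ) 1,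
      HasDerivAt (fun t : ℝ => φ (x + t • ρ x) * (1 + t • jacMat ρ x).det) (F' ε x) ε := by
    refine Filter.Eventually.of_forall fun x ε _ => ?_
    have hg : HasDerivAt (fun t : ℝ => x + t • ρ x) (ρ x) ε := by
      simpa using ((hasDerivAt_id ε).smul_const (ρ x)).const_add x
    have hphi : HasDerivAt (fun t : ℝ => φ (x + t • ρ x))
        (fderiv ℝ φ (x + ε • ρ x) (ρ x)) ε :=
      (hφ.differentiable one_ne_zero _).hasFDerivAt.comp_hasDerivAt ε hg
    exact hphi.mul (hasDerivAt_det_one_add_smul (jacMat ρ x) ε)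
  obtain ⟨-, hmain⟩ := hasDerivAt_integral_of_dominated_loc_of_deriv_le (Metric.ball_mem_nhds 0 one_pos) hF_meas hF_int
    hF'_meas h_bound bound_int h_diff
  have heq : (fun x => fderiv ℝ φ x (ρ x) + φ x * (jacMat ρ x).trace) = F' 0 := by
    funext x
    simp [hF'def]
  rw [heq]
  exact hmain
end
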